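/- Let (J_i)_{i∈ω} be a sequence of pairwise non-isomorphic maximal ideals on ω, and let I be the Fin-Fubini sum of the J_i, i.e. the ideal on ω×ω given by C ∈ I if and only if {i ∈ ω : C_i ∉ J_i} is finite, where C_i = {j : (i,j) ∈ C}. Then I satisfies condition (C1): every bi-I-invariant injection f : ω×ω → ω×ω has fix(f) ∈ I*. -/

import Mathlib

open Set Filter

/-- `I` is an ideal on the countable set `X`: closed under subsets and finite
unions, contains all finite sets, and does not contain the whole set. -/
def IsIdeal {X : Type*} (I : Set (Set X)) : Prop :=
  (∀ A B : Set X, A ∈ I → B ⊆ A → B ∈ I) ∧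
  (∀ A B : Set X, A ∈ I → B ∈ I → A ∪ B ∈ I) ∧
  (∀ A : Set X, A.Finite → A ∈ I) ∧
  (Set.univ : Set X) ∉ I

/-- The restriction `I|A = {B ∩ A : B ∈ I}`. -/
def restr {X : Type*} (I : Set (Set X)) (A : Set X) : Set (Set X) :=
  {C | ∃ B ∈ I, C = B ∩ A}

/-- `I|A ≅ I|B`: there is a bijection `f : B → A` such that for every
`C ⊆ A`, `C ∈ I|A ↔ f⁻¹[C] ∈ I|B`. -/
def RIso {X : Type*} (I : Set (Set X)) (A B : Set X) : Prop :=
  ∃ f : X → X, Set.BijOn f B A ∧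
    ∀ C : Set X, C ⊆ A → (C ∈ restr I A ↔ B ∩ f ⁻¹' C ∈ restr I B)

/-- The homogeneity family `H(I) = {A : I|A ≅ I}`. -/
def HF {X : Type*} (I : Set (Set X)) : Set (Set X) := {A | RIso I A Set.univ}

/-- `I` is homogeneous if `H(I) = I⁺`. -/
def HomogIdeal {X : Type*} (I : Set (Set X)) : Prop := HF I = {A | A ∉ I}

/-- `I` is anti-homogeneous if `H(I) = I*`. -/
def AntiHomogIdeal {X : Type*} (I : Set (Set X)) : Prop := HF I = {A | Aᶜ ∈ I}

/-- `I ≅ J`: a bijection `f` of underlying sets with `A ∈ I ↔ f⁻¹[A] ∈ J`. -/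
def Isomorphic {X Y : Type*} (I : Set (Set X)) (J : Set (Set Y)) : Prop :=
  ∃ f : Y → X, Function.Bijective f ∧ ∀ A : Set X, A ∈ I ↔ f ⁻¹' A ∈ J

/-- The ideal `Fin ⊕ P(ω)` on `{0,1} × ω` (here `Bool × ℕ`, `true` playing the
role of `1`): all sets `A` with `{n : (1,n) ∈ A}` finite. -/
def FinOplusAll : Set (Set (Bool × ℕ)) := {A | {n : ℕ | (true, n) ∈ A}.Finite}

/-- An ideal on `ω` is admissible if it is not isomorphic to `Fin ⊕ P(ω)`. -/
def Admissible (I : Set (Set ℕ)) : Prop := ¬ Isomorphic I FinOplusAll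

/-- An injection `f` is bi-`I`-invariant if `f[A] ∈ I ↔ A ∈ I` for all `A`. -/
def BiInvariant {X : Type*} (I : Set (Set X)) (f : X → X) : Prop :=
  Function.Injective f ∧ ∀ A : Set X, f '' A ∈ I ↔ A ∈ I

/-- The set of fixed points of `f`. -/
def fixedSet {X : Type*} (f : X → X) : Set X := {x | f x = x}

/-- `I` is a maximal ideal. -/
def MaximalIdeal {X : Type*} (I : Set (Set X)) : Prop :=
  IsIdeal I ∧ ∀ A : Set X, A ∈ I ∨ Aᶜ ∈ I

/-- The `Fin`-Fubini sum of a sequence of ideals on `ω`: an ideal on `ω × ω`. -/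
def FubiniSum (J : ℕ → Set (Set ℕ)) : Set (Set (ℕ × ℕ)) :=
  {C | {i : ℕ | {j : ℕ | (i, j) ∈ C} ∉ J i}.Finite}

-- ============ basic maximal ideal facts ============
namespace MI
variable {X : Type*} {K : Set (Set X)}
lemma subset_mem (hK : MaximalIdeal K) {A B : Set X} (hA : A ∈ K) (h : B ⊆ A) : B ∈ K :=
  hK.1.1 A B hA h
lemma union_mem (hK : MaximalIdeal K) {A B : Set X} (hA : A ∈ K) (hB : B ∈ K) : A ∪ B ∈ K :=
  hK.1.2.1 A B hA hB
lemma finite_mem (hK : MaximalIdeal K) {A : Set X} (hA : A.Finite) : A ∈ K :=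
  hK.1.2.2.1 A hA
lemma empty_mem (hK : MaximalIdeal K) : (∅ : Set X) ∈ K := finite_mem hK finite_empty
lemma compl_mem (hK : MaximalIdeal K) {A : Set X} (hA : A ∉ K) : Aᶜ ∈ K :=
  (hK.2 A).resolve_left hA
lemma not_compl_mem (hK : MaximalIdeal K) {A : Set X} (hA : A ∈ K) : Aᶜ ∉ K := by
  intro h
  exact hK.1.2.2.2 (by simpa [Set.union_compl_self] using union_mem hK hA h)
lemma not_mem_superset (hK : MaximalIdeal K) {A B : Set X} (hA : A ∉ K) (h : A ⊆ B) : B ∉ K :=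
  fun hB => hA (subset_mem hK hB h)
lemma inter_not_mem (hK : MaximalIdeal K) {A B : Set X} (hA : A ∉ K) (hB : B ∉ K) :
    A ∩ B ∉ K := by
  intro h
  have h1 : Aᶜ ∈ K := compl_mem hK hA
  have h2 : Bᶜ ∈ K := compl_mem hK hB
  have : (A ∩ B) ∪ (Aᶜ ∪ Bᶜ) ∈ K := union_mem hK h (union_mem hK h1 h2)
  exact hK.1.2.2.2 (by simpa [← Set.compl_inter, Set.union_compl_self] using this)
lemma diff_not_mem (hK : MaximalIdeal K) {A B : Set X} (hA : A ∉ K) (hB : B ∈ K) :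
    A \ B ∉ K := by
  intro h
  exact hA (subset_mem hK (union_mem hK h hB) (fun x hx => by
    by_cases hxB : x ∈ B
    · exact Or.inr hxB
    · exact Or.inl ⟨hx, hxB⟩))
lemma union3_not_mem (hK : MaximalIdeal K) {A B₀ B₁ B₂ : Set X} (hA : A ∉ K)
    (h : A ⊆ B₀ ∪ B₁ ∪ B₂) : B₀ ∉ K ∨ B₁ ∉ K ∨ B₂ ∉ K := by
  by_contra hc
  push_neg at hc
  exact hA (subset_mem hK (union_mem hK (union_mem hK hc.1 hc.2.1) hc.2.2) h)
lemma infinite_of_not_mem (hK : MaximalIdeal K) {A : Set X} (hA : A ∉ K) : A.Infinite := by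
  intro h
  exact hA (finite_mem hK h)
lemma biUnion_lt_mem (hK : MaximalIdeal K) {A : ℕ → Set X} (n : ℕ)
    (h : ∀ m, m < n → A m ∈ K) : {x | ∃ m, m < n ∧ x ∈ A m} ∈ K := by
  induction n with
  | zero => exact subset_mem hK (empty_mem hK) (by intro x hx; obtain ⟨m, hm, _⟩ := hx; omega)
  | succ n ih =>
    have h1 : {x | ∃ m, m < n ∧ x ∈ A m} ∈ K := ih (fun m hm => h m (by omega))
    have h2 : A n ∈ K := h n (by omega)
    refine subset_mem hK (union_mem hK h1 h2) ?_
    intro x hx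
    obtain ⟨m, hm, hxm⟩ := hx
    rcases Nat.lt_succ_iff_lt_or_eq.mp hm with hm' | rfl
    · exact Or.inl ⟨m, hm', hxm⟩
    · exact Or.inr hxm
lemma exists_lt_not_mem (hK : MaximalIdeal K) {A : ℕ → Set X} {S : Set X} {n : ℕ}
    (hS : S ∉ K) (h : S ⊆ {x | ∃ m, m < n ∧ x ∈ A m}) : ∃ m, m < n ∧ A m ∉ K := by
  by_contra hc
  push_neg at hc
  exact hS (subset_mem hK (biUnion_lt_mem hK n hc) h)
end MI

-- ============ FubiniSum facts ============
section Fub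
variable {J : ℕ → Set (Set ℕ)}

lemma fub_mem_of_subsingleton_bad {C : Set (ℕ × ℕ)} {i₀ : ℕ}
    (h : {i : ℕ | {j : ℕ | (i, j) ∈ C} ∉ J i} ⊆ {i₀}) : C ∈ FubiniSum J :=
  Set.Finite.subset (Set.finite_singleton i₀) h

lemma fub_mem_of_all_small {C : Set (ℕ × ℕ)}
    (h : ∀ i : ℕ, {j : ℕ | (i, j) ∈ C} ∈ J i) : C ∈ FubiniSum J :=
  Set.Finite.subset Set.finite_empty (fun i hi => absurd (h i) hi)

lemma fub_not_mem {C : Set (ℕ × ℕ)} {S : Set ℕ} (hS : S.Infinite)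
    (h : ∀ i ∈ S, {j : ℕ | (i, j) ∈ C} ∉ J i) : C ∉ FubiniSum J := by
  intro hC
  exact (hS.mono h) hC

end Fub

/-- Selector dichotomy. -/
lemma selector {S : Set ℕ} (hS : S.Infinite) (g : ℕ → ℕ) :
    (∃ k, {i ∈ S | g i = k}.Infinite) ∨
    (∃ M ⊆ S, M.Infinite ∧ Set.InjOn g M) := by
  by_cases hfib : ∃ k, {i ∈ S | g i = k}.Infinite
  · exact Or.inl hfib
  · push_neg at hfib
    right
    have hR : (g '' S).Infinite := by
      intro hfin
      have : S ⊆ ⋃ k ∈ g '' S, {i ∈ S | g i = k} := by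
        intro i hi; exact Set.mem_biUnion ⟨i, hi, rfl⟩ ⟨hi, rfl⟩
      exact (hS.mono this) (hfin.biUnion (fun k _ => hfib k))
    classical
    choose sel hsel using fun (k : ℕ) (hk : k ∈ g '' S) => hk
    set t : ℕ → ℕ := fun k => if hk : k ∈ g '' S then sel k hk else 0 with ht
    refine ⟨t '' (g '' S), ?_, ?_, ?_⟩
    · rintro _ ⟨k, hk, rfl⟩
      simp only [ht, dif_pos hk]
      exact (hsel k hk).1
    · refine Set.Infinite.image ?_ hR
      intro k hk k' hk' he
      simp only [ht, dif_pos hk, dif_pos hk'] at he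
      rw [← (hsel k hk).2, ← (hsel k' hk').2, he]
    · rintro _ ⟨k, hk, rfl⟩ _ ⟨k', hk', rfl⟩ he
      simp only [ht, dif_pos hk, dif_pos hk'] at he ⊢
      rw [(hsel k hk).2, (hsel k' hk').2] at he
      subst he
      rfl


-- ============ coloring ============
open Classical
noncomputable section

def forb (B : Set ℕ) (h : ℕ → ℕ) (n : ℕ) (prev : ∀ m, m < n → Fin 3) : Finset (Fin 3) :=
  (if hc : h n < n ∧ n ∈ B then {prev (h n) hc.1} else ∅) ∪
  (if hc : ∃ m, m < n ∧ m ∈ B ∧ h m = n then {prev hc.choose hc.choose_spec.1} else ∅)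




lemma forb_nonempty (B : Set ℕ) (h : ℕ → ℕ) (n : ℕ) (prev : ∀ m, m < n → Fin 3) :
    (Finset.univ \ forb B h n prev).Nonempty := by
  have hcard : (forb B h n prev).card ≤ 2 := by
    refine le_trans (Finset.card_union_le _ _) ?_
    have h1 : (if hc : h n < n ∧ n ∈ B then ({prev (h n) hc.1} : Finset (Fin 3)) else ∅).card ≤ 1 := by
      split <;> simp
    have h2 : (if hc : ∃ m, m < n ∧ m ∈ B ∧ h m = n then ({prev hc.choose hc.choose_spec.1} : Finset (Fin 3)) else ∅).card ≤ 1 := by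
      split <;> simp
    omega
  rw [← Finset.card_pos, Finset.card_sdiff_of_subset (Finset.subset_univ _)]
  simp only [Finset.card_univ, Fintype.card_fin]
  omega

def pickColor (B : Set ℕ) (h : ℕ → ℕ) (n : ℕ) (prev : ∀ m, m < n → Fin 3) : Fin 3 :=
  (forb_nonempty B h n prev).choose

lemma pickColor_not_mem (B : Set ℕ) (h : ℕ → ℕ) (n : ℕ) (prev : ∀ m, m < n → Fin 3) :
    pickColor B h n prev ∉ forb B h n prev := by
  have := (forb_nonempty B h n prev).choose_spec
  rw [Finset.mem_sdiff] at this
  exact this.2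

def col (B : Set ℕ) (h : ℕ → ℕ) : ℕ → Fin 3
  | n => pickColor B h n (fun m _ => col B h m)
termination_by n => n
decreasing_by exact ‹_›

lemma col_eq (B : Set ℕ) (h : ℕ → ℕ) (n : ℕ) :
    col B h n = pickColor B h n (fun m _ => col B h m) := by
  rw [col]

/-- main coloring property -/
lemma col_spec (B : Set ℕ) (h : ℕ → ℕ) (hinj : Set.InjOn h B)
    (hfix : ∀ j ∈ B, h j ≠ j) :
    ∀ j ∈ B, col B h j ≠ col B h (h j) := by
  intro j hj
  rcases lt_trichotomy (h j) j with hlt | heq | hgt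
  · -- rule 1 at n := j
    have hnm := pickColor_not_mem B h j (fun m _ => col B h m)
    rw [col_eq B h j]
    intro hcontra
    apply hnm
    rw [forb, Finset.mem_union]
    left
    rw [dif_pos ⟨hlt, hj⟩]
    simpa using hcontra
  · exact absurd heq (hfix j hj)
  · -- rule 2 at n := h j, with m := j
    have hex : ∃ m, m < h j ∧ m ∈ B ∧ h m = h j := ⟨j, hgt, hj, rfl⟩
    have hchoose : hex.choose = j := by
      have hs := hex.choose_spec
      exact hinj hs.2.1 hj hs.2.2
    have hnm := pickColor_not_mem B h (h j) (fun m _ => col B h m)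
    rw [col_eq B h (h j)]
    intro hcontra
    apply hnm
    rw [forb, Finset.mem_union]
    right
    rw [dif_pos hex]
    simp only [Finset.mem_singleton]
    rw [hchoose]
    exact hcontra.symm

/-- Katětov three-set lemma with an ultrafilter: a fixed-point free injection
on a non-small set admits a non-small subset moved off itself. -/
lemma exists_free_subset {K : Set (Set ℕ)} (hK : MaximalIdeal K)
    {B : Set ℕ} {h : ℕ → ℕ} (hB : B ∉ K) (hinj : Set.InjOn h B)
    (hfix : ∀ j ∈ B, h j ≠ j) :
    ∃ B' ⊆ B, B' ∉ K ∧ ∀ j ∈ B', h j ∉ B' := by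
  classical
  set c := col B h with hc
  have hspec := col_spec B h hinj hfix
  have h3 : ∀ x : Fin 3, x = 0 ∨ x = 1 ∨ x = 2 := by decide
  have hcov : B ⊆ {j ∈ B | c j = 0} ∪ {j ∈ B | c j = 1} ∪ {j ∈ B | c j = 2} := by
    intro j hj
    rcases h3 (c j) with h0 | h1 | h2
    · exact Or.inl (Or.inl ⟨hj, h0⟩)
    · exact Or.inl (Or.inr ⟨hj, h1⟩)
    · exact Or.inr ⟨hj, h2⟩
  have hun := MI.union3_not_mem hK hB hcov
  have key : ∀ t : Fin 3, {j ∈ B | c j = t} ∉ K → ∃ B' ⊆ B, B' ∉ K ∧ ∀ j ∈ B', h j ∉ B' := by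
    intro t ht
    refine ⟨{j ∈ B | c j = t}, fun j hj => hj.1, ht, ?_⟩
    rintro j ⟨hjB, hjc⟩ ⟨hhB, hhc⟩
    exact hspec j hjB (by show c j = c (h j); rw [hjc, hhc])
  rcases hun with h0 | h1 | h2
  exacts [key 0 h0, key 1 h1, key 2 h2]

end


-- ============ iso machinery ============
/-- Split a non-small set: an infinite small part whose removal stays non-small. -/
lemma split_small {K : Set (Set ℕ)} (hK : MaximalIdeal K) {A : Set ℕ} (hA : A ∉ K) :
    ∃ E ⊆ A, E.Infinite ∧ E ∈ K ∧ A \ E ∉ K := by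
  classical
  have hAinf : A.Infinite := MI.infinite_of_not_mem hK hA
  obtain ⟨e⟩ : Nonempty (ℕ ↪ A) := ⟨hAinf.natEmbedding⟩
  set v : ℕ → ℕ := fun n => (e n : ℕ) with hv
  have hvinj : Function.Injective v := fun a b hab => e.injective (Subtype.ext hab)
  set P : Set ℕ := v '' {n | Even n} with hP
  have hPA : P ⊆ A := by rintro _ ⟨n, -, rfl⟩; exact (e n).2
  have heven : ({n : ℕ | Even n}).Infinite := by
    apply Set.infinite_of_forall_exists_gt
    intro a
    exact ⟨2 * a + 2, by rw [Set.mem_setOf_eq, Nat.even_iff]; omega, by omega⟩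
  have hodd : ({n : ℕ | ¬ Even n}).Infinite := by
    apply Set.infinite_of_forall_exists_gt
    intro a
    exact ⟨2 * a + 1, by rw [Set.mem_setOf_eq, Nat.even_iff]; omega, by omega⟩
  have hPinf : P.Infinite := Set.Infinite.image (hvinj.injOn) heven
  have hQinf : (A \ P).Infinite := by
    have : v '' {n | ¬ Even n} ⊆ A \ P := by
      rintro _ ⟨n, hn, rfl⟩
      refine ⟨(e n).2, ?_⟩
      rintro ⟨m, hm, hmv⟩
      exact hn (by rwa [hvinj hmv] at hm)
    exact (Set.Infinite.image (hvinj.injOn) hodd).mono this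
  by_cases hPK : P ∈ K
  · exact ⟨P, hPA, hPinf, hPK, MI.diff_not_mem hK hA hPK⟩
  · refine ⟨A \ P, Set.diff_subset, hQinf, ?_, ?_⟩
    · exact MI.subset_mem hK (MI.compl_mem hK hPK) (fun x hx => hx.2)
    · rwa [Set.diff_diff_cancel_left hPA]

/-- Extend an injection on `A'` (with coinfinite domain and range) to a bijection of `ℕ`. -/
lemma bij_extend {A' : Set ℕ} {h : ℕ → ℕ} (hinj : Set.InjOn h A')
    (hs : (A'ᶜ).Infinite) (ht : ((h '' A')ᶜ).Infinite) :
    ∃ φ : ℕ → ℕ, Function.Bijective φ ∧ ∀ x ∈ A', φ x = h x := by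
  classical
  have hsi : Infinite ↥(A'ᶜ) := hs.to_subtype
  have hti : Infinite ↥((h '' A')ᶜ) := ht.to_subtype
  letI : DecidablePred (· ∈ A'ᶜ) := fun _ => Classical.dec _
  letI : DecidablePred (· ∈ (h '' A')ᶜ) := fun _ => Classical.dec _
  letI d1 : Denumerable ↥(A'ᶜ) := Nat.Subtype.denumerable _
  letI d2 : Denumerable ↥((h '' A')ᶜ) := Nat.Subtype.denumerable _
  set g : ↥(A'ᶜ) ≃ ↥((h '' A')ᶜ) := (Denumerable.eqv _).trans (Denumerable.eqv _).symm with hg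
  refine ⟨fun x => if hx : x ∈ A' then h x else (g ⟨x, hx⟩ : ℕ), ⟨?_, ?_⟩, ?_⟩
  · intro x y hxy
    by_cases hx : x ∈ A' <;> by_cases hy : y ∈ A' <;> simp only [dif_pos, dif_neg, hx, hy] at hxy
    · exact hinj hx hy hxy
    · exact absurd ⟨x, hx, hxy⟩ (g ⟨y, hy⟩).2
    · exact absurd ⟨y, hy, hxy.symm⟩ (g ⟨x, hx⟩).2
    · have := g.injective (Subtype.ext hxy)
      exact congrArg Subtype.val this
  · intro y
    by_cases hy : y ∈ h '' A'
    · obtain ⟨x, hx, rfl⟩ := hy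
      exact ⟨x, by simp [dif_pos hx]⟩
    · refine ⟨(g.symm ⟨y, hy⟩ : ℕ), ?_⟩
      have hmem : ((g.symm ⟨y, hy⟩ : ℕ)) ∉ A' := (g.symm ⟨y, hy⟩).2
      simp only [dif_neg hmem]
      have : g ⟨(g.symm ⟨y, hy⟩ : ℕ), hmem⟩ = ⟨y, hy⟩ := by
        rw [Subtype.coe_eta]
        exact g.apply_symm_apply _
      rw [this]
  · intro x hx
    simp [dif_pos hx]

/-- Dichotomy: if the ideals are pairwise non-isomorphic, a non-small set can be
shrunk to a non-small set with small image. -/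
lemma shrink_of_not_iso {J : ℕ → Set (Set ℕ)} (hmax : ∀ i, MaximalIdeal (J i))
    (hnoniso : ∀ i j, i ≠ j → ¬ Isomorphic (J i) (J j))
    {i k : ℕ} (hik : k ≠ i) {A : Set ℕ} {h : ℕ → ℕ}
    (hA : A ∉ J i) (hinj : Set.InjOn h A) :
    ∃ B, B ⊆ A ∧ B ∉ J i ∧ h '' B ∈ J k := by
  by_contra hcon
  push_neg at hcon
  obtain ⟨E, hEA, hEinf, hEK, hA'⟩ := split_small (hmax i) hA
  set A' := A \ E with hA'def
  have hA'A : A' ⊆ A := Set.diff_subset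
  have hinj' : Set.InjOn h A' := hinj.mono hA'A
  have hsc : (A'ᶜ).Infinite := hEinf.mono (fun x hx hxA' => hxA'.2 hx)
  have himgdisj : h '' E ⊆ (h '' A')ᶜ := by
    rintro _ ⟨e, he, rfl⟩ ⟨a, ha, hae⟩
    have hae' : a = e := hinj (hA'A ha) (hEA he) hae
    exact ha.2 (hae' ▸ he)
  have htc : ((h '' A')ᶜ).Infinite := (hEinf.image (hinj.mono hEA)).mono himgdisj
  obtain ⟨φ, hφbij, hφeq⟩ := bij_extend hinj' hsc htc
  have claim : ∀ Y : Set ℕ, φ ⁻¹' Y ∉ J i → Y ∉ J k := by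
    intro Y hY
    have hB : φ ⁻¹' Y ∩ A' ∉ J i := MI.inter_not_mem (hmax i) hY hA'
    have h1 : h '' (φ ⁻¹' Y ∩ A') ∉ J k := hcon _ (fun x hx => hA'A hx.2) hB
    refine MI.not_mem_superset (hmax k) h1 ?_
    rintro _ ⟨x, ⟨hxY, hxA'⟩, rfl⟩
    rw [← hφeq x hxA']
    exact hxY
  apply hnoniso k i hik
  refine ⟨φ, hφbij, fun Y => ⟨?_, ?_⟩⟩
  · intro hY
    by_contra hpre
    exact claim Y hpre hY
  · intro hpre
    by_contra hYk
    have h2 : (φ ⁻¹' Y)ᶜ ∉ J i := MI.not_compl_mem (hmax i) hpre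
    have h3 : φ ⁻¹' (Yᶜ) ∉ J i := by rwa [Set.preimage_compl]
    have h4 : Yᶜ ∉ J k := claim _ h3
    have h5 := MI.inter_not_mem (hmax k) hYk h4
    rw [Set.inter_compl_self] at h5
    exact h5 (MI.empty_mem (hmax k))

-- ============ main machinery ============

def Afib (f : ℕ × ℕ → ℕ × ℕ) (i k : ℕ) : Set ℕ := {j | (f (i, j)).1 = k}

lemma f_eq_of_mem {f : ℕ × ℕ → ℕ × ℕ} {i j k : ℕ} (hj : j ∈ Afib f i k) :
    f (i, j) = (k, (f (i, j)).2) := by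
  rw [Prod.ext_iff]
  exact ⟨hj, rfl⟩

lemma injOn_snd {f : ℕ × ℕ → ℕ × ℕ} (hfinj : Function.Injective f) (i k : ℕ) :
    Set.InjOn (fun j => (f (i, j)).2) (Afib f i k) := by
  intro a ha b hb hab
  have hab' : (f (i, a)).2 = (f (i, b)).2 := hab
  have h1 : f (i, a) = f (i, b) := by
    rw [f_eq_of_mem ha, f_eq_of_mem hb, hab']
  exact (Prod.ext_iff.mp (hfinj h1)).2

/-- Case N: infinitely many rows all of whose fibers are small. -/
lemma lemN {J : ℕ → Set (Set ℕ)} {f : ℕ × ℕ → ℕ × ℕ}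
    (hmax : ∀ i, MaximalIdeal (J i)) (hbi : BiInvariant (FubiniSum J) f)
    (hS : {i : ℕ | ∀ k, Afib f i k ∈ J i}.Infinite) : False := by
  classical
  obtain ⟨hfinj, hfinv⟩ := hbi
  set S := {i : ℕ | ∀ k, Afib f i k ∈ J i} with hSdef
  set B : ℕ → Set ℕ := fun i => {j | i < (f (i, j)).1} with hBdef
  have hB : ∀ i ∈ S, B i ∉ J i := by
    intro i hi hBmem
    have hcompl : {j | ¬ i < (f (i, j)).1} ∈ J i := by
      refine MI.subset_mem (hmax i)
        (MI.biUnion_lt_mem (hmax i) (A := fun m => Afib f i m) (i + 1) (fun m _ => hi m)) ?_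
      intro j hj
      simp only [Set.mem_setOf_eq, not_lt] at hj
      exact ⟨(f (i, j)).1, by omega, rfl⟩
    refine (hmax i).1.2.2.2 (MI.subset_mem (hmax i) (MI.union_mem (hmax i) hBmem hcompl) ?_)
    intro j _
    by_cases hc : i < (f (i, j)).1
    · exact Or.inl hc
    · exact Or.inr hc
  set C : Set (ℕ × ℕ) := {p | p.1 ∈ S ∧ p.2 ∈ B p.1} with hCdef
  have hC : C ∉ FubiniSum J := by
    refine fub_not_mem hS ?_
    intro i hi
    have he : {j | (i, j) ∈ C} = B i := by
      ext j
      exact ⟨fun h => h.2, fun h => ⟨hi, h⟩⟩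
    rw [he]
    exact hB i hi
  have hfC : f '' C ∉ FubiniSum J := fun hmem => hC ((hfinv C).mp hmem)
  set bad := {k : ℕ | {j' : ℕ | (k, j') ∈ f '' C} ∉ J k} with hbaddef
  have hbad : bad.Infinite := by
    by_contra hfin
    rw [Set.not_infinite] at hfin
    exact hfC hfin
  set Q : ℕ → ℕ → Set ℕ :=
    fun m k => {j' | ∃ j, ((m, j) ∈ C) ∧ f (m, j) = (k, j')} with hQdef
  have hsel : ∀ k ∈ bad, ∃ m, m < k ∧ Q m k ∉ J k := by
    intro k hk
    refine MI.exists_lt_not_mem (hmax k) hk ?_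
    intro j' hj'
    obtain ⟨⟨m, jj⟩, hmem, heq⟩ := hj'
    have h1 : (f (m, jj)).1 = k := congrArg Prod.fst heq
    have h2 : m < (f (m, jj)).1 := hmem.2
    exact ⟨m, by omega, ⟨jj, hmem, heq⟩⟩
  set nsel : ℕ → ℕ := fun k => if hk : k ∈ bad then (hsel k hk).choose else 0 with hnseldef
  have hnsel_spec : ∀ k ∈ bad, nsel k < k ∧ Q (nsel k) k ∉ J k := by
    intro k hk
    simp only [hnseldef, dif_pos hk]
    exact (hsel k hk).choose_spec
  have hmemS : ∀ k ∈ bad, nsel k ∈ S := by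
    intro k hk
    have hQ := (hnsel_spec k hk).2
    have hne : (Q (nsel k) k).Nonempty := by
      rcases Set.eq_empty_or_nonempty (Q (nsel k) k) with he | hne
      · rw [he] at hQ
        exact absurd (MI.empty_mem (hmax k)) hQ
      · exact hne
    obtain ⟨j', j, hj, -⟩ := hne
    exact hj.1
  rcases selector hbad nsel with ⟨i₀, hK'⟩ | ⟨M, hMsub, hMinf, hMinj⟩
  · -- infinite fiber of the selector: one source row, image spread over infinitely many columns
    set K' := {k ∈ bad | nsel k = i₀} with hK'def
    set E : Set (ℕ × ℕ) := {p | p.1 = i₀ ∧ p.2 ∈ B i₀ ∧ (f p).1 ∈ K'} with hEdef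
    have hE : E ∈ FubiniSum J := by
      refine fub_mem_of_subsingleton_bad (i₀ := i₀) ?_
      intro i hi
      by_contra hne
      apply hi
      have he : {j | (i, j) ∈ E} = ∅ := by
        ext j
        simp only [hEdef, Set.mem_setOf_eq, Set.mem_empty_iff_false, iff_false]
        rintro ⟨h1, -, -⟩
        exact hne h1
      rw [he]
      exact MI.empty_mem (hmax i)
    have hfE : f '' E ∈ FubiniSum J := (hfinv E).mpr hE
    refine fub_not_mem hK' ?_ hfE
    intro k hk
    have hQ := (hnsel_spec k hk.1).2
    rw [hk.2] at hQ
    refine MI.not_mem_superset (hmax k) hQ ?_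
    rintro j' ⟨j, hmem, heq⟩
    refine ⟨(i₀, j), ⟨rfl, hmem.2, ?_⟩, heq⟩
    rw [heq]
    exact hk
  · -- selector injective on an infinite set
    set E : Set (ℕ × ℕ) :=
      {p | ∃ k ∈ M, p.1 = nsel k ∧ p.2 ∈ B (nsel k) ∧ (f p).1 = k} with hEdef
    have hE : E ∈ FubiniSum J := by
      refine fub_mem_of_all_small ?_
      intro i
      by_cases hex : ∃ k ∈ M, nsel k = i
      · obtain ⟨k₀, hk₀M, hk₀⟩ := hex
        have hsub : {j | (i, j) ∈ E} ⊆ Afib f i k₀ := by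
          rintro j ⟨k, hkM, hki, hjB, hfk⟩
          have hkk : k = k₀ := hMinj hkM hk₀M (by rw [← hki, hk₀])
          subst hkk
          exact hfk
        refine MI.subset_mem (hmax i) ?_ hsub
        have hiS : i ∈ S := by
          rw [← hk₀]
          exact hmemS k₀ (hMsub hk₀M)
        exact hiS k₀
      · have he : {j | (i, j) ∈ E} = ∅ := by
          ext j
          simp only [hEdef, Set.mem_setOf_eq, Set.mem_empty_iff_false, iff_false]
          rintro ⟨k, hkM, hki, -, -⟩
          exact hex ⟨k, hkM, hki.symm⟩
        rw [he]
        exact MI.empty_mem (hmax i)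
    have hfE : f '' E ∈ FubiniSum J := (hfinv E).mpr hE
    refine fub_not_mem hMinf ?_ hfE
    intro k hkM
    have hk := hMsub hkM
    have hQ := (hnsel_spec k hk).2
    refine MI.not_mem_superset (hmax k) hQ ?_
    rintro j' ⟨j, hmem, heq⟩
    exact ⟨(nsel k, j), ⟨k, hkM, rfl, hmem.2, by rw [heq]⟩, heq⟩

/-- Case M: infinitely many rows whose dominant fiber goes to another row. -/
lemma lemM {J : ℕ → Set (Set ℕ)} {f : ℕ × ℕ → ℕ × ℕ}
    (hmax : ∀ i, MaximalIdeal (J i))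
    (hnoniso : ∀ i j, i ≠ j → ¬ Isomorphic (J i) (J j))
    (hbi : BiInvariant (FubiniSum J) f)
    (hS : {i : ℕ | ∃ k, k ≠ i ∧ Afib f i k ∉ J i}.Infinite) : False := by
  classical
  obtain ⟨hfinj, hfinv⟩ := hbi
  set S := {i : ℕ | ∃ k, k ≠ i ∧ Afib f i k ∉ J i} with hSdef
  set σ : ℕ → ℕ :=
    fun i => if hi : ∃ k, k ≠ i ∧ Afib f i k ∉ J i then hi.choose else 0 with hσdef
  have hσspec : ∀ i ∈ S, σ i ≠ i ∧ Afib f i (σ i) ∉ J i := by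
    intro i hi
    have hi' : ∃ k, k ≠ i ∧ Afib f i k ∉ J i := hi
    simp only [hσdef, dif_pos hi']
    exact hi'.choose_spec
  rcases selector hS σ with ⟨k₀, hM⟩ | ⟨M, hMsub, hMinf, hMinj⟩
  · -- constant case: everything goes to one column
    set C : Set (ℕ × ℕ) := {p | p.1 ∈ {i ∈ S | σ i = k₀} ∧ p.2 ∈ Afib f p.1 k₀} with hCdef
    have hC : C ∉ FubiniSum J := by
      refine fub_not_mem hM ?_
      intro i hi
      have he : {j | (i, j) ∈ C} = Afib f i k₀ := by
        ext j
        exact ⟨fun h => h.2, fun h => ⟨hi, h⟩⟩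
      rw [he]
      have h2 := (hσspec i hi.1).2
      rwa [hi.2] at h2
    have hfC : f '' C ∈ FubiniSum J := by
      refine fub_mem_of_subsingleton_bad (i₀ := k₀) ?_
      intro k hk
      by_contra hkne
      apply hk
      have he : {j' : ℕ | (k, j') ∈ f '' C} = ∅ := by
        ext j'
        simp only [Set.mem_setOf_eq, Set.mem_empty_iff_false, iff_false]
        rintro ⟨⟨i, j⟩, ⟨hiM, hjA⟩, heq⟩
        exact hkne ((congrArg Prod.fst heq).symm.trans hjA)
      rw [he]
      exact MI.empty_mem (hmax k)
    exact hC ((hfinv C).mp hfC)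
  · -- injective case: shrink each row using non-isomorphism
    have hex : ∀ i ∈ M,
        ∃ B, B ⊆ Afib f i (σ i) ∧ B ∉ J i ∧ (fun j => (f (i, j)).2) '' B ∈ J (σ i) := by
      intro i hiM
      obtain ⟨hne, hA⟩ := hσspec i (hMsub hiM)
      exact shrink_of_not_iso hmax hnoniso hne hA (injOn_snd hfinj i (σ i))
    set Bs : ℕ → Set ℕ := fun i => if hi : i ∈ M then (hex i hi).choose else ∅ with hBsdef
    have hBspec : ∀ i ∈ M, Bs i ⊆ Afib f i (σ i) ∧ Bs i ∉ J i ∧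
        (fun j => (f (i, j)).2) '' Bs i ∈ J (σ i) := by
      intro i hi
      simp only [hBsdef, dif_pos hi]
      exact (hex i hi).choose_spec
    set C : Set (ℕ × ℕ) := {p | p.1 ∈ M ∧ p.2 ∈ Bs p.1} with hCdef
    have hC : C ∉ FubiniSum J := by
      refine fub_not_mem hMinf ?_
      intro i hi
      have he : {j | (i, j) ∈ C} = Bs i := by
        ext j
        exact ⟨fun h => h.2, fun h => ⟨hi, h⟩⟩
      rw [he]
      exact (hBspec i hi).2.1
    have hfC : f '' C ∈ FubiniSum J := by
      refine fub_mem_of_all_small ?_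
      intro k
      by_cases hex2 : ∃ i ∈ M, σ i = k
      · obtain ⟨i₀, hi₀M, hi₀⟩ := hex2
        have hsub : {j' : ℕ | (k, j') ∈ f '' C} ⊆ (fun j => (f (i₀, j)).2) '' Bs i₀ := by
          rintro j' ⟨⟨i, j⟩, ⟨hiM, hjB⟩, heq⟩
          have hfst : (f (i, j)).1 = σ i := (hBspec i hiM).1 hjB
          have hσik : σ i = k := hfst.symm.trans (congrArg Prod.fst heq)
          have hii : i = i₀ := hMinj hiM hi₀M (hσik.trans hi₀.symm)
          subst hii
          exact ⟨j, hjB, congrArg Prod.snd heq⟩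
        refine MI.subset_mem (hmax k) ?_ hsub
        rw [← hi₀]
        exact (hBspec i₀ hi₀M).2.2
      · have he : {j' : ℕ | (k, j') ∈ f '' C} = ∅ := by
          ext j'
          simp only [Set.mem_setOf_eq, Set.mem_empty_iff_false, iff_false]
          rintro ⟨⟨i, j⟩, ⟨hiM, hjB⟩, heq⟩
          have hfst : (f (i, j)).1 = σ i := (hBspec i hiM).1 hjB
          exact hex2 ⟨i, hiM, hfst.symm.trans (congrArg Prod.fst heq)⟩
        rw [he]
        exact MI.empty_mem (hmax k)
    exact hC ((hfinv C).mp hfC)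

/-- Case F: infinitely many rows with dominant fiber to itself but moved within the row. -/
lemma lemF {J : ℕ → Set (Set ℕ)} {f : ℕ × ℕ → ℕ × ℕ}
    (hmax : ∀ i, MaximalIdeal (J i)) (hbi : BiInvariant (FubiniSum J) f)
    (hS : {i : ℕ | Afib f i i ∉ J i ∧ {j | f (i, j) ≠ (i, j)} ∉ J i}.Infinite) : False := by
  classical
  obtain ⟨hfinj, hfinv⟩ := hbi
  set S := {i : ℕ | Afib f i i ∉ J i ∧ {j | f (i, j) ≠ (i, j)} ∉ J i} with hSdef
  have hex : ∀ i ∈ S, ∃ B', B' ⊆ {j | f (i, j) ≠ (i, j)} ∩ Afib f i i ∧ B' ∉ J i ∧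
      ∀ j ∈ B', (f (i, j)).2 ∉ B' := by
    intro i hi
    have hB0 : {j | f (i, j) ≠ (i, j)} ∩ Afib f i i ∉ J i :=
      MI.inter_not_mem (hmax i) hi.2 hi.1
    have hinj : Set.InjOn (fun j => (f (i, j)).2)
        ({j | f (i, j) ≠ (i, j)} ∩ Afib f i i) :=
      (injOn_snd hfinj i i).mono Set.inter_subset_right
    have hfix : ∀ j ∈ {j | f (i, j) ≠ (i, j)} ∩ Afib f i i, (f (i, j)).2 ≠ j := by
      rintro j ⟨hjne, hjA⟩ heqj
      apply hjne
      rw [f_eq_of_mem hjA, heqj]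
    exact exists_free_subset (hmax i) hB0 hinj hfix
  set Bs : ℕ → Set ℕ := fun i => if hi : i ∈ S then (hex i hi).choose else ∅ with hBsdef
  have hBspec : ∀ i ∈ S, Bs i ⊆ {j | f (i, j) ≠ (i, j)} ∩ Afib f i i ∧ Bs i ∉ J i ∧
      ∀ j ∈ Bs i, (f (i, j)).2 ∉ Bs i := by
    intro i hi
    simp only [hBsdef, dif_pos hi]
    exact (hex i hi).choose_spec
  set C : Set (ℕ × ℕ) := {p | p.1 ∈ S ∧ p.2 ∈ Bs p.1} with hCdef
  have hC : C ∉ FubiniSum J := by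
    refine fub_not_mem hS ?_
    intro i hi
    have he : {j | (i, j) ∈ C} = Bs i := by
      ext j
      exact ⟨fun h => h.2, fun h => ⟨hi, h⟩⟩
    rw [he]
    exact (hBspec i hi).2.1
  have hfC : f '' C ∈ FubiniSum J := by
    refine fub_mem_of_all_small ?_
    intro k
    by_cases hk : k ∈ S
    · have hsub : {j' : ℕ | (k, j') ∈ f '' C} ⊆ (fun j => (f (k, j)).2) '' Bs k := by
        rintro j' ⟨⟨i, j⟩, ⟨hiS, hjB⟩, heq⟩
        have hjA : j ∈ Afib f i i := ((hBspec i hiS).1 hjB).2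
        have hik : i = k := hjA.symm.trans (congrArg Prod.fst heq)
        subst hik
        exact ⟨j, hjB, congrArg Prod.snd heq⟩
      refine MI.subset_mem (hmax k) ?_ hsub
      have himg : (fun j => (f (k, j)).2) '' Bs k ⊆ (Bs k)ᶜ := by
        rintro _ ⟨j, hj, rfl⟩
        exact (hBspec k hk).2.2 j hj
      exact MI.subset_mem (hmax k) (MI.compl_mem (hmax k) (hBspec k hk).2.1) himg
    · have he : {j' : ℕ | (k, j') ∈ f '' C} = ∅ := by
        ext j'
        simp only [Set.mem_setOf_eq, Set.mem_empty_iff_false, iff_false]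
        rintro ⟨⟨i, j⟩, ⟨hiS, hjB⟩, heq⟩
        have hjA : j ∈ Afib f i i := ((hBspec i hiS).1 hjB).2
        have hik : i = k := hjA.symm.trans (congrArg Prod.fst heq)
        exact hk (hik ▸ hiS)
      rw [he]
      exact MI.empty_mem (hmax k)
  exact hC ((hfinv C).mp hfC)


/-- the `Fin`-Fubini sum of pairwise non-isomorphic maximal
ideals satisfies condition (C1). -/
theorem stmt_12 (J : ℕ → Set (Set ℕ)) (hmax : ∀ i, MaximalIdeal (J i))
    (hnoniso : ∀ i j, i ≠ j → ¬ Isomorphic (J i) (J j)) :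
    ∀ f : ℕ × ℕ → ℕ × ℕ, BiInvariant (FubiniSum J) f →
      (fixedSet f)ᶜ ∈ FubiniSum J := by
  intro f hbi
  by_contra hcon
  have hsec : {i : ℕ | {j | (i, j) ∈ (fixedSet f)ᶜ} ∉ J i}
      = {i : ℕ | {j | f (i, j) ≠ (i, j)} ∉ J i} := by
    ext i
    have : {j | (i, j) ∈ (fixedSet f)ᶜ} = {j | f (i, j) ≠ (i, j)} := by
      ext j
      simp [fixedSet]
    simp only [Set.mem_setOf_eq]
    rw [this]
  have hT : {i : ℕ | {j | f (i, j) ≠ (i, j)} ∉ J i}.Infinite := by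
    by_contra hfin
    rw [Set.not_infinite] at hfin
    exact hcon (show {i : ℕ | {j | (i, j) ∈ (fixedSet f)ᶜ} ∉ J i}.Finite from hsec ▸ hfin)
  have hsub : {i : ℕ | {j | f (i, j) ≠ (i, j)} ∉ J i} ⊆
      {i : ℕ | ∀ k, Afib f i k ∈ J i} ∪
      ({i : ℕ | ∃ k, k ≠ i ∧ Afib f i k ∉ J i} ∪
       {i : ℕ | Afib f i i ∉ J i ∧ {j | f (i, j) ≠ (i, j)} ∉ J i}) := by
    intro i hi
    by_cases h1 : ∀ k, Afib f i k ∈ J i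
    · exact Or.inl h1
    · push_neg at h1
      obtain ⟨k, hk⟩ := h1
      by_cases h2 : k = i
      · subst h2
        exact Or.inr (Or.inr ⟨hk, hi⟩)
      · exact Or.inr (Or.inl ⟨k, h2, hk⟩)
  have hun := hT.mono hsub
  rw [Set.infinite_union] at hun
  rcases hun with h | h
  · exact lemN hmax hbi h
  · rw [Set.infinite_union] at h
    rcases h with h | h
    · exact lemM hmax hnoniso hbi h
    · exact lemF hmax hbi h
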